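/- Let f : ℂ → ℂ satisfy f(z + 2π) = f(z) + 2π and f(z + 2πi) = f(z) + κ for all z ∈ ℂ, with |f(z)| → ∞ as |z| → ∞. Then Im κ ≠ 0. -/

import Mathlib

open Real Complex Filter

theorem stmt10 (f : ℂ → ℂ) (κ : ℂ)
    (h1 : ∀ z, f (z + 2 * Real.pi) = f z + 2 * Real.pi)
    (h2 : ∀ z, f (z + 2 * Real.pi * Complex.I) = f z + κ)
    (hinf : Filter.Tendsto (fun z => ‖f z‖) (Bornology.cobounded ℂ) Filter.atTop) :
    κ.im ≠ 0 := by
  intro him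
  -- iterate h1 over ℤ
  have hA : ∀ (n : ℤ) (z : ℂ), f (z + n * (2 * Real.pi)) = f z + n * (2 * Real.pi) := by
    intro n
    induction n using Int.induction_on with
    | zero => intro z; simp
    | succ k ih =>
        intro z
        push_cast at ih ⊢
        have := h1 (z + (k:ℂ) * (2 * Real.pi))
        rw [ih] at this
        rw [show z + ((k:ℂ) + 1) * (2 * Real.pi) = z + (k:ℂ) * (2 * Real.pi) + 2 * Real.pi by ring, h1, ih]
        ring
    | pred k ih =>
        intro z
        push_cast at ih ⊢
        have := h1 (z + (-(k:ℂ) - 1) * (2 * Real.pi))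
        rw [show z + (-(k:ℂ) - 1) * (2 * Real.pi) + 2 * Real.pi = z + (-(k:ℂ)) * (2 * Real.pi) by ring] at this
        rw [ih z] at this
        linear_combination -this
  have hB : ∀ (m : ℕ) (z : ℂ), f (z + m * (2 * Real.pi * Complex.I)) = f z + m * κ := by
    intro m
    induction m with
    | zero => intro z; simp
    | succ k ih =>
        intro z
        have := h2 (z + k * (2 * Real.pi * Complex.I))
        rw [ih] at this
        push_cast
        rw [show z + (k + 1 : ℂ) * (2 * Real.pi * Complex.I)
            = z + (k : ℂ) * (2 * Real.pi * Complex.I) + 2 * Real.pi * Complex.I by ring, this]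
        ring
  have hpi : (0:ℝ) < Real.pi := Real.pi_pos
  set c := κ.re with hc
  have hκ : κ = (c : ℂ) := by
    apply Complex.ext <;> simp [hc, him]
  -- sequence
  set N : ℕ → ℤ := fun m => -round ((m : ℝ) * c / (2 * Real.pi))
  set z : ℕ → ℂ := fun m => (N m : ℂ) * (2 * Real.pi) + (m : ℂ) * (2 * Real.pi * Complex.I) with hz
  have hfz : ∀ m, f (z m) = f 0 + (N m) * (2 * Real.pi) + m * κ := by
    intro m
    have := hB m ((N m : ℂ) * (2 * Real.pi))
    rw [show ((N m : ℂ) * (2 * Real.pi)) = 0 + (N m : ℂ) * (2 * Real.pi) by ring, hA (N m) 0] at this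
    simpa [hz, add_assoc] using this
  have hbound : ∀ m, ‖f (z m)‖ ≤ ‖f 0‖ + Real.pi := by
    intro m
    have h1' : |(N m : ℝ) * (2 * Real.pi) + (m : ℝ) * c| ≤ Real.pi := by
      set r : ℝ := (m : ℝ) * c / (2 * Real.pi) with hr
      have hrd := abs_sub_round r
      have h2pi : (0:ℝ) < 2 * Real.pi := by linarith
      have e1 : (N m : ℝ) * (2 * Real.pi) + (m : ℝ) * c = (r - round r) * (2 * Real.pi) := by
        simp only [N, hr]
        push_cast
        field_simp
        ring
      rw [e1, abs_mul, abs_of_pos h2pi]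
      nlinarith
    calc ‖f (z m)‖ = ‖f 0 + (((N m : ℝ) * (2 * Real.pi) + (m : ℝ) * c : ℝ) : ℂ)‖ := by
          rw [hfz m, hκ]; push_cast; ring_nf
      _ ≤ ‖f 0‖ + ‖(((N m : ℝ) * (2 * Real.pi) + (m : ℝ) * c : ℝ) : ℂ)‖ := norm_add_le _ _
      _ ≤ ‖f 0‖ + Real.pi := by
          rw [Complex.norm_real]
          exact add_le_add_right h1' _
  -- z m tends to cobounded
  have hznorm : ∀ m : ℕ, (m : ℝ) * (2 * Real.pi) ≤ ‖z m‖ := by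
    intro m
    have : |(z m).im| ≤ ‖z m‖ := Complex.abs_im_le_norm (z m)
    have him' : (z m).im = (m : ℝ) * (2 * Real.pi) := by
      simp [hz, Complex.add_im, Complex.mul_im]
    rw [him'] at this
    calc (m : ℝ) * (2 * Real.pi) ≤ |(m : ℝ) * (2 * Real.pi)| := le_abs_self _
      _ ≤ ‖z m‖ := this
  have hzc : Tendsto z atTop (Bornology.cobounded ℂ) := by
    rw [← tendsto_norm_atTop_iff_cobounded]
    apply tendsto_atTop_mono hznorm
    have : Tendsto (fun m : ℕ => (m : ℝ)) atTop atTop := tendsto_natCast_atTop_atTop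
    exact this.atTop_mul_const (by linarith)
  have := (hinf.comp hzc)
  obtain ⟨m, hm⟩ := (this.eventually (eventually_ge_atTop (‖f 0‖ + Real.pi + 1))).exists
  have := hbound m
  simp only [Function.comp] at hm
  linarith
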